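/- The function K₀ satisfies the modified Bessel differential equation of order zero on the positive half-line: for every x > 0, x·K₀''(x) + K₀'(x) − x·K₀(x) = 0. -/

import Mathlib

open Real MeasureTheory Set Metric Filter Topology

/-- The modified Bessel function of the second kind of order zero,
`K₀(x) = ∫₀^∞ exp (−x cosh t) dt`. -/
noncomputable def K0 (x : ℝ) : ℝ := ∫ t in Ioi (0:ℝ), Real.exp (-x * Real.cosh t)

lemma self_le_cosh_aux (t : ℝ) (ht : 0 ≤ t) : t ≤ Real.cosh t := by
  have h1 := Real.quadratic_le_exp_of_nonneg ht
  have h2 := Real.exp_pos (-t)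
  rw [Real.cosh_eq]
  nlinarith

lemma aux_bound (k : ℕ) {c : ℝ} (hc : 0 < c) {t : ℝ} (ht : 0 ≤ t) :
    Real.cosh t ^ k * Real.exp (-c * Real.cosh t)
      ≤ ((k.factorial : ℝ) * (2 / c) ^ k) * Real.exp (-(c / 2) * t) := by
  have hu : (0:ℝ) < Real.cosh t := Real.cosh_pos t
  have hut : t ≤ Real.cosh t := self_le_cosh_aux t ht
  have h1 : (c / 2 * Real.cosh t) ^ k / (k.factorial : ℝ)
      ≤ Real.exp (c / 2 * Real.cosh t) :=
    Real.pow_div_factorial_le_exp _ (by positivity) k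
  have hfac : (0:ℝ) < (k.factorial : ℝ) := by positivity
  have h2 : Real.cosh t ^ k
      ≤ (k.factorial : ℝ) * (2 / c) ^ k * Real.exp (c / 2 * Real.cosh t) := by
    rw [div_le_iff₀ hfac, mul_pow] at h1
    calc Real.cosh t ^ k
        = ((c / 2) ^ k * Real.cosh t ^ k) * (2 / c) ^ k := by
          rw [mul_comm ((c/2)^k), mul_assoc, ← mul_pow]
          field_simp
          rw [one_pow]
      _ ≤ (Real.exp (c / 2 * Real.cosh t) * (k.factorial : ℝ)) * (2 / c) ^ k := by
          apply mul_le_mul_of_nonneg_right h1 (by positivity)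
      _ = (k.factorial : ℝ) * (2 / c) ^ k * Real.exp (c / 2 * Real.cosh t) := by ring
  have h3 : Real.cosh t ^ k * Real.exp (-c * Real.cosh t)
      ≤ (k.factorial : ℝ) * (2 / c) ^ k * Real.exp (-(c / 2) * Real.cosh t) := by
    calc Real.cosh t ^ k * Real.exp (-c * Real.cosh t)
        ≤ ((k.factorial : ℝ) * (2 / c) ^ k * Real.exp (c / 2 * Real.cosh t))
            * Real.exp (-c * Real.cosh t) :=
          mul_le_mul_of_nonneg_right h2 (Real.exp_pos _).le
      _ = (k.factorial : ℝ) * (2 / c) ^ k * Real.exp (-(c / 2) * Real.cosh t) := by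
          rw [mul_assoc, ← Real.exp_add]; ring_nf
  refine h3.trans ?_
  apply mul_le_mul_of_nonneg_left _ (by positivity)
  apply Real.exp_le_exp.2
  nlinarith

lemma integrable_aux (k : ℕ) {c : ℝ} (hc : 0 < c) :
    IntegrableOn (fun t => Real.cosh t ^ k * Real.exp (-c * Real.cosh t)) (Ioi 0) := by
  have hmajor : IntegrableOn
      (fun t => ((k.factorial : ℝ) * (2 / c) ^ k) * Real.exp (-(c / 2) * t)) (Ioi 0) :=
    (exp_neg_integrableOn_Ioi 0 (by positivity)).const_mul _
  refine hmajor.mono' ?_ ?_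
  · exact (Continuous.aestronglyMeasurable (by continuity)).restrict
  · filter_upwards [self_mem_ae_restrict (measurableSet_Ioi : MeasurableSet (Ioi (0:ℝ)))]
      with t ht
    rw [Real.norm_eq_abs, abs_of_nonneg (by positivity)]
    exact aux_bound k hc (le_of_lt ht)

lemma hasDerivAt_aux (k : ℕ) {x : ℝ} (hx : 0 < x) :
    HasDerivAt (fun y => ∫ t in Ioi (0:ℝ), Real.cosh t ^ k * Real.exp (-y * Real.cosh t))
      (∫ t in Ioi (0:ℝ), -(Real.cosh t ^ (k+1) * Real.exp (-x * Real.cosh t))) x := by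
  have half : (0:ℝ) < x / 2 := by linarith
  have key := hasDerivAt_integral_of_dominated_loc_of_deriv_le (x₀ := x)
    (F := fun y t => Real.cosh t ^ k * Real.exp (-y * Real.cosh t))
    (F' := fun y t => -(Real.cosh t ^ (k+1) * Real.exp (-y * Real.cosh t)))
    (bound := fun t => Real.cosh t ^ (k+1) * Real.exp (-(x/2) * Real.cosh t))
    (μ := volume.restrict (Ioi (0:ℝ))) (ball_mem_nhds x half)
    ?_ ?_ ?_ ?_ ?_ ?_
  · exact key.2
  · filter_upwards with y
    exact (Continuous.aestronglyMeasurable (by continuity)).restrict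
  · exact integrable_aux k hx
  · exact (Continuous.aestronglyMeasurable (by continuity)).restrict
  · filter_upwards [self_mem_ae_restrict (measurableSet_Ioi : MeasurableSet (Ioi (0:ℝ)))]
      with t ht y hy
    have hyx : x / 2 ≤ y := by
      have := abs_lt.1 (mem_ball_iff_norm.1 hy)
      linarith [this.1]
    have hu : (0:ℝ) < Real.cosh t := Real.cosh_pos t
    rw [norm_neg, Real.norm_eq_abs, abs_of_nonneg (by positivity)]
    apply mul_le_mul_of_nonneg_left _ (by positivity)
    apply Real.exp_le_exp.2
    nlinarith
  · exact integrable_aux (k+1) half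
  · filter_upwards with t y _
    have h1 : HasDerivAt (fun y : ℝ => -y * Real.cosh t) (-Real.cosh t) y := by
      simpa using (hasDerivAt_id y).neg.mul_const (Real.cosh t)
    have h2 := (h1.exp).const_mul (Real.cosh t ^ k)
    refine h2.congr_deriv ?_
    rw [pow_succ]
    ring

theorem tendsto_sinh_mul_exp {x : ℝ} (hx : 0 < x) :
    Tendsto (fun t => -(Real.sinh t * Real.exp (-x * Real.cosh t))) atTop (𝓝 0) := by
  have hcosh : Tendsto Real.cosh atTop atTop := by
    apply tendsto_atTop_mono' atTop _ tendsto_id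
    filter_upwards [eventually_ge_atTop (0:ℝ)] with t ht
    exact self_le_cosh_aux t ht
  have hmul : Tendsto (fun u : ℝ => x * u) atTop atTop :=
    tendsto_id.const_mul_atTop hx
  have base : Tendsto (fun v : ℝ => v ^ 1 * Real.exp (-v)) atTop (𝓝 0) :=
    Real.tendsto_pow_mul_exp_neg_atTop_nhds_zero 1
  have comp : Tendsto (fun u : ℝ => (x * u) ^ 1 * Real.exp (-(x * u))) atTop (𝓝 0) :=
    base.comp hmul
  have h0 : Tendsto (fun u : ℝ => u * Real.exp (-x * u)) atTop (𝓝 0) := by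
    have := comp.const_mul (1 / x)
    rw [mul_zero] at this
    refine this.congr fun u => ?_
    field_simp
  have hbig : Tendsto (fun t => Real.cosh t * Real.exp (-x * Real.cosh t)) atTop (𝓝 0) :=
    h0.comp hcosh
  have hbigneg := hbig.neg
  rw [neg_zero] at hbigneg
  refine tendsto_of_tendsto_of_tendsto_of_le_of_le hbigneg hbig ?_ ?_
  · intro t
    have h2 : Real.sinh t ≤ Real.cosh t := by
      rw [Real.sinh_eq, Real.cosh_eq]
      nlinarith [Real.exp_pos t, Real.exp_pos (-t)]
    have := mul_le_mul_of_nonneg_right h2 (Real.exp_pos (-x * Real.cosh t)).le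
    simp only
    linarith
  · intro t
    have h1 : -Real.cosh t ≤ Real.sinh t := by
      rw [Real.sinh_eq, Real.cosh_eq]
      nlinarith [Real.exp_pos t, Real.exp_pos (-t)]
    have := mul_le_mul_of_nonneg_right h1 (Real.exp_pos (-x * Real.cosh t)).le
    simp only
    nlinarith

lemma ftc_aux {x : ℝ} (hx : 0 < x) :
    ∫ t in Ioi (0:ℝ),
      (x * Real.cosh t ^ 2 - Real.cosh t - x) * Real.exp (-x * Real.cosh t) = 0 := by
  set g : ℝ → ℝ := fun t => -(Real.sinh t * Real.exp (-x * Real.cosh t)) with hg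
  have hderiv : ∀ t ∈ Ioi (0:ℝ), HasDerivAt g
      ((x * Real.cosh t ^ 2 - Real.cosh t - x) * Real.exp (-x * Real.cosh t)) t := by
    intro t _
    have h1 : HasDerivAt (fun t : ℝ => -x * Real.cosh t) (-x * Real.sinh t) t :=
      (Real.hasDerivAt_cosh t).const_mul (-x)
    have h2 : HasDerivAt (fun t => -(Real.sinh t * Real.exp (-x * Real.cosh t))) _ t :=
      ((Real.hasDerivAt_sinh t).mul h1.exp).neg
    convert h2 using 1
    have hs := Real.sinh_sq t
    linear_combination (-(x * Real.exp (-x * Real.cosh t))) * hs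
  have hcont : ContinuousWithinAt g (Ici (0:ℝ)) 0 :=
    (Continuous.continuousWithinAt (by continuity))
  have hint : IntegrableOn
      (fun t => (x * Real.cosh t ^ 2 - Real.cosh t - x) * Real.exp (-x * Real.cosh t))
      (Ioi 0) := by
    have i2 := (integrable_aux 2 hx).const_mul x
    have i1 := integrable_aux 1 hx
    have i0 := (integrable_aux 0 hx).const_mul x
    have := (i2.sub i1).sub i0
    refine IntegrableOn.congr_fun this ?_ measurableSet_Ioi
    intro t _
    simp only [Pi.sub_apply, pow_one, pow_zero, one_mul]
    ring
  have := integral_Ioi_of_hasDerivAt_of_tendsto hcont hderiv hint (tendsto_sinh_mul_exp hx)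
  rw [this, hg]
  simp

theorem K0_modified_bessel_ode (x : ℝ) (hx : 0 < x) :
    x * deriv (deriv K0) x + deriv K0 x - x * K0 x = 0 := by
  set G1 : ℝ → ℝ := fun y => ∫ t in Ioi (0:ℝ), Real.cosh t ^ 1 * Real.exp (-y * Real.cosh t)
    with hG1
  -- derivative of K0 on Ioi 0
  have hK0deriv : ∀ y ∈ Ioi (0:ℝ), HasDerivAt K0 (-G1 y) y := by
    intro y hy
    have h := hasDerivAt_aux 0 (x := y) hy
    simp only [pow_zero, one_mul, zero_add] at h
    have heq : K0 = fun z => ∫ t in Ioi (0:ℝ), Real.exp (-z * Real.cosh t) := rfl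
    rw [heq]
    convert h using 1
    rw [hG1, ← integral_neg]
  have hEq : deriv K0 =ᶠ[nhds x] fun y => -G1 y := by
    filter_upwards [Ioi_mem_nhds hx] with y hy
    exact (hK0deriv y hy).deriv
  have hd1 : deriv K0 x = -G1 x := (hK0deriv x hx).deriv
  -- second derivative
  have hG1deriv : HasDerivAt G1
      (∫ t in Ioi (0:ℝ), -(Real.cosh t ^ 2 * Real.exp (-x * Real.cosh t))) x :=
    hasDerivAt_aux 1 hx
  have hd2 : deriv (deriv K0) x
      = ∫ t in Ioi (0:ℝ), Real.cosh t ^ 2 * Real.exp (-x * Real.cosh t) := by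
    rw [hEq.deriv_eq, deriv.fun_neg, hG1deriv.deriv, ← integral_neg]
    simp
  -- expand everything as integrals
  have i2 := integrable_aux 2 hx
  have i1 := integrable_aux 1 hx
  have i0 := integrable_aux 0 hx
  have key := ftc_aux hx
  have split : ∫ t in Ioi (0:ℝ),
      (x * Real.cosh t ^ 2 - Real.cosh t - x) * Real.exp (-x * Real.cosh t)
      = x * (∫ t in Ioi (0:ℝ), Real.cosh t ^ 2 * Real.exp (-x * Real.cosh t))
        - (∫ t in Ioi (0:ℝ), Real.cosh t ^ 1 * Real.exp (-x * Real.cosh t))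
        - x * ∫ t in Ioi (0:ℝ), Real.exp (-x * Real.cosh t) := by
    rw [← integral_const_mul, ← integral_const_mul, ← integral_sub, ← integral_sub]
    · congr 1
      ext t
      simp only [pow_one]
      ring
    · exact (i2.const_mul x).sub i1
    · have := i0.const_mul x
      simpa using this
    · exact i2.const_mul x
    · exact i1
  rw [hd1, hd2]
  have hK0 : K0 x = ∫ t in Ioi (0:ℝ), Real.exp (-x * Real.cosh t) := rfl
  rw [hK0, hG1]
  rw [split] at key
  linarith [key]
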